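/- For any odd integer l with 1 ≤ l < p, we have g̃_l(n) ≥ n for all 1 ≤ n ≤ p; moreover there exists an integer m with 0 ≤ m ≤ p such that g̃_l(n) > n for all 1 ≤ n ≤ m and g̃_l(n) = n for all m < n ≤ p. In particular, g̃_l(p) = p. -/

import Mathlib

/-- The (k,l)-Göbel sequence with values in ℚ: g 1 = l and
    (n+1) * g (n+1) = g n * (n + g n ^ (k-1)). -/
def gobel (k : ℕ) (l : ℚ) : ℕ → ℚ
  | 0 => 0
  | 1 => l
  | (n+2) => gobel k l (n+1) * (((n:ℚ)+1) + (gobel k l (n+1)) ^ (k-1)) / ((n:ℚ)+2)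

/-- The auxiliary sequence g̃_l of Kobayashi–Seki. -/
def gtilde (p : ℕ) [Fact p.Prime] (l : ℕ) : ℕ → ℤ
  | 0 => (l : ℤ)
  | 1 => (l : ℤ)
  | (n+2) =>
    let g := gtilde p l (n+1)
    if 0 < g ∧ g < (p : ℤ) then g + legendreSym p ((n:ℤ)+1) * legendreSym p g else g

/-- A rational number belongs to the localization ℤ_(p). -/
def inZp (p : ℕ) (x : ℚ) : Prop := ¬ (p ∣ x.den)

/-- Congruence modulo p inside ℤ_(p). -/
def modCongZp (p : ℕ) (x y : ℚ) : Prop :=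
  ∃ z : ℚ, ¬ (p ∣ z.den) ∧ x - y = (p : ℚ) * z

lemma gtilde_step (p : ℕ) [Fact p.Prime] (l n : ℕ) (hn : 1 ≤ n) :
    gtilde p l (n+1) =
      if 0 < gtilde p l n ∧ gtilde p l n < (p:ℤ) then
        gtilde p l n + legendreSym p (n:ℤ) * legendreSym p (gtilde p l n)
      else gtilde p l n := by
  obtain ⟨m, rfl⟩ : ∃ m, n = m + 1 := ⟨n - 1, by omega⟩
  show gtilde p l (m+2) = _
  simp only [gtilde]
  push_cast
  rfl

lemma leg_pm (p : ℕ) [Fact p.Prime] (a : ℤ) (h : ¬ (p:ℤ) ∣ a) :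
    legendreSym p a = 1 ∨ legendreSym p a = -1 := by
  apply legendreSym.eq_one_or_neg_one
  rwa [Ne, ZMod.intCast_zmod_eq_zero_iff_dvd]

lemma gtilde_inv (p : ℕ) [Fact p.Prime] (l : ℕ) (hlodd : Odd l)
    (hl1 : 1 ≤ l) (hl2 : l < p) :
    ∀ n : ℕ, 1 ≤ n → n ≤ p →
      (n : ℤ) ≤ gtilde p l n ∧ gtilde p l n ≤ (p:ℤ) ∧
        (gtilde p l n = (p:ℤ) ∨ Even (gtilde p l n - n)) := by
  intro n
  induction n with
  | zero => omega
  | succ n ih =>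
    intro _ hnp
    rcases Nat.eq_zero_or_pos n with rfl | hn1
    · have h0 : gtilde p l (0+1) = (l:ℤ) := rfl
      rw [h0]
      refine ⟨by exact_mod_cast hl1, by exact_mod_cast hl2.le, Or.inr ?_⟩
      obtain ⟨k, hk⟩ := hlodd
      rw [Int.even_iff]
      push_cast [hk]
      omega
    · have hnp' : n ≤ p := by omega
      obtain ⟨hg1, hg2, hg3⟩ := ih hn1 hnp'
      rw [gtilde_step p l n hn1]
      set g := gtilde p l n with hgdef
      by_cases hc : 0 < g ∧ g < (p:ℤ)
      · rw [if_pos hc]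
        have hnltp : (n:ℤ) < p := by exact_mod_cast (by omega : n < p)
        have hln : legendreSym p (n:ℤ) = 1 ∨ legendreSym p (n:ℤ) = -1 := by
          apply leg_pm
          intro hd
          have := Int.le_of_dvd (by exact_mod_cast hn1) hd
          omega
        have hlg : legendreSym p g = 1 ∨ legendreSym p g = -1 := by
          apply leg_pm
          intro hd
          have := Int.le_of_dvd hc.1 hd
          omega
        have hple : (n:ℤ) + 1 ≤ p := by exact_mod_cast hnp
        rcases eq_or_ne g (n:ℤ) with heq | hne
        · rw [heq]
          rcases hln with h | h <;> simp [h] <;>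
            omega
        · have heven : (g - n) % 2 = 0 := by
            rcases hg3 with h | h
            · exact absurd h (by omega)
            · rw [Int.even_iff] at h; exact h
          have hge : (n:ℤ) + 2 ≤ g := by omega
          have heps : legendreSym p (n:ℤ) * legendreSym p g = 1 ∨
              legendreSym p (n:ℤ) * legendreSym p g = -1 := by
            rcases hln with h1 | h1 <;> rcases hlg with h2 | h2 <;> simp [h1, h2]
          refine ⟨by push_cast; omega, by omega, Or.inr ?_⟩
          rw [Int.even_iff]
          push_cast
          omega
      · rw [if_neg hc]
        have hgp : g = (p:ℤ) := by
          rcases hg3 with h | h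
          · exact h
          · push_neg at hc
            have := hc (by omega)
            omega
        exact ⟨by rw [hgp]; exact_mod_cast hnp, by omega, Or.inl hgp⟩

lemma gtilde_fix_succ (p : ℕ) [Fact p.Prime] (l n : ℕ) (h1 : 1 ≤ n) (h2 : n < p)
    (he : gtilde p l n = (n:ℤ)) : gtilde p l (n+1) = ((n:ℤ)+1) := by
  rw [gtilde_step p l n h1, he]
  have hln : legendreSym p (n:ℤ) = 1 ∨ legendreSym p (n:ℤ) = -1 := by
    apply leg_pm
    intro hd
    have := Int.le_of_dvd (by exact_mod_cast h1) hd
    have : (n:ℤ) < p := by exact_mod_cast h2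
    omega
  have hc : (0:ℤ) < n ∧ (n:ℤ) < p := ⟨by exact_mod_cast h1, by exact_mod_cast h2⟩
  rw [if_pos hc]
  rcases hln with h | h <;> simp [h]

theorem stmt2 (p : ℕ) [Fact p.Prime] (hp2 : p ≠ 2) (l : ℕ) (hlodd : Odd l)
    (hl1 : 1 ≤ l) (hl2 : l < p) :
    (∀ n : ℕ, 1 ≤ n → n ≤ p → (n : ℤ) ≤ gtilde p l n) ∧
    (∃ m : ℕ, m ≤ p ∧ (∀ n : ℕ, 1 ≤ n → n ≤ m → (n : ℤ) < gtilde p l n) ∧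
      (∀ n : ℕ, m < n → n ≤ p → gtilde p l n = (n : ℤ))) ∧
    gtilde p l p = (p : ℤ) := by
  have hp1 : 1 ≤ p := (Fact.out : p.Prime).one_lt.le
  have hlow : ∀ n : ℕ, 1 ≤ n → n ≤ p → (n : ℤ) ≤ gtilde p l n :=
    fun n h1 h2 => (gtilde_inv p l hlodd hl1 hl2 n h1 h2).1
  have hgp : gtilde p l p = (p:ℤ) := by
    have h := gtilde_inv p l hlodd hl1 hl2 p hp1 le_rfl
    omega
  refine ⟨hlow, ?_, hgp⟩
  have hex : ∃ n, 1 ≤ n ∧ n ≤ p ∧ gtilde p l n = (n:ℤ) := ⟨p, hp1, le_rfl, hgp⟩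
  set n0 := Nat.find hex with hn0
  obtain ⟨hn01, hn0p, hn0eq⟩ := Nat.find_spec hex
  refine ⟨n0 - 1, by omega, ?_, ?_⟩
  · intro n h1 h2
    have hnlt : n < n0 := by omega
    have := Nat.find_min hex hnlt
    have hne : gtilde p l n ≠ (n:ℤ) := by
      intro h
      exact this ⟨h1, by omega, h⟩
    have := hlow n h1 (by omega)
    omega
  · intro n hmn hnp
    have hge : n0 ≤ n := by omega
    clear hmn
    induction n, hge using Nat.le_induction with
    | base => exact hn0eq
    | succ n hn ih =>
      have := gtilde_fix_succ p l n (by omega) (by omega) (ih (by omega))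
      rw [this]
      push_cast
      ring
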